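/- Let c ≠ 0 be a real number and let x : ℝ → ℝ be twice differentiable with x''(t) + c·x'(t) = 0 for all t, x(0) = x₀, x'(0) = v₀, and set A₁ = x₀ + v₀/c. Define the Hamiltonian Ĥ(q, p) = p²/2 − c²·q²/2 + c²·A₁·q. Then the function t ↦ Ĥ(x(t), x'(t)) is constant on ℝ. -/

import Mathlib

theorem stmt_4 (c : ℝ) (hc : c ≠ 0) (x : ℝ → ℝ) (x₀ v₀ A₁ : ℝ)
    (hx : Differentiable ℝ x) (hx' : Differentiable ℝ (deriv x))
    (hode : ∀ t : ℝ, deriv (deriv x) t + c * deriv x t = 0)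
    (h0 : x 0 = x₀) (h0' : deriv x 0 = v₀)
    (hA₁ : A₁ = x₀ + v₀ / c)
    (H : ℝ → ℝ → ℝ)
    (hH : ∀ q p : ℝ, H q p = p ^ 2 / 2 - c ^ 2 * q ^ 2 / 2 + c ^ 2 * A₁ * q) :
    ∃ C : ℝ, ∀ t : ℝ, H (x t) (deriv x t) = C := by
  -- first integral: deriv x t + c * x t is constant
  set g : ℝ → ℝ := fun t => deriv x t + c * x t with hg
  have hgdiff : Differentiable ℝ g := hx'.add (hx.const_mul c)
  have hgderiv : ∀ t, deriv g t = 0 := by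
    intro t
    have : deriv g t = deriv (deriv x) t + c * deriv x t := by
      rw [hg]
      rw [deriv_fun_add (hx' t) ((hx t).const_mul c), deriv_const_mul c (hx t)]
    rw [this, hode t]
  have hconst : ∀ t, g t = g 0 := by
    intro t
    exact is_const_of_deriv_eq_zero hgdiff hgderiv t 0
  have key : ∀ t, deriv x t = c * A₁ - c * x t := by
    intro t
    have h1 := hconst t
    simp only [hg] at h1
    rw [h0, h0'] at h1
    rw [hA₁]
    have : c * (x₀ + v₀ / c) = c * x₀ + v₀ := by field_simp
    linarith [h1, this]
  refine ⟨c ^ 2 * A₁ ^ 2 / 2, fun t => ?_⟩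
  rw [hH, key t]
  ring
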